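/- For a connected graph G with m edges and real numbers p > q > 0, the general Albertson irregularity index satisfies A_p(G) ≥ m^(1/p - 1/q) · A_q(G), with equality if and only if |d(u) - d(v)| is constant over all edges uv of G. -/

import Mathlib

open Finset

lemma rpow_left_inj' {x y z : ℝ} (hx : 0 ≤ x) (hy : 0 ≤ y) (hz : 0 < z) :
    x ^ z = y ^ z ↔ x = y := by
  rw [le_antisymm_iff, le_antisymm_iff, Real.rpow_le_rpow_iff hx hy hz,
    Real.rpow_le_rpow_iff hy hx hz]

lemma jensen_key {ι : Type*} (s : Finset ι) (hs : s.Nonempty) (a : ι → ℝ)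
    (ha : ∀ i ∈ s, 0 ≤ a i) {r : ℝ} (hr : 1 < r) :
    (∑ i ∈ s, a i) ^ r ≤ (s.card : ℝ) ^ (r - 1) * ∑ i ∈ s, a i ^ r ∧
    ((∑ i ∈ s, a i) ^ r = (s.card : ℝ) ^ (r - 1) * ∑ i ∈ s, a i ^ r ↔
      ∀ i ∈ s, ∀ j ∈ s, a i = a j) := by
  have hn : (0:ℝ) < (s.card : ℝ) := by exact_mod_cast hs.card_pos
  set n : ℝ := (s.card : ℝ) with hndef
  have hcs := strictConvexOn_rpow hr
  have h₀ : ∀ i ∈ s, 0 < n⁻¹ := fun i _ => inv_pos.2 hn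
  have h₁ : ∑ _i ∈ s, n⁻¹ = 1 := by
    rw [Finset.sum_const, nsmul_eq_mul]
    field_simp
    exact hndef.symm
  have hmem : ∀ i ∈ s, a i ∈ Set.Ici (0:ℝ) := fun i hi => ha i hi
  have hJ := hcs.convexOn.map_sum_le (fun i hi => (h₀ i hi).le) h₁ hmem
  have hE := hcs.map_sum_eq_iff h₀ h₁ hmem
  simp only [smul_eq_mul] at hJ hE
  set A := ∑ i ∈ s, a i with hAdef
  set B := ∑ i ∈ s, a i ^ r with hBdef
  have hA0 : 0 ≤ A := Finset.sum_nonneg ha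
  have hsum1 : ∑ i ∈ s, n⁻¹ * a i = A / n := by
    rw [← Finset.mul_sum, ← hAdef]; ring
  have hsum2 : ∑ i ∈ s, n⁻¹ * a i ^ r = B / n := by
    rw [← Finset.mul_sum, ← hBdef]; ring
  rw [hsum1, hsum2] at hJ
  rw [hsum1] at hE
  have hnr : (0:ℝ) < n ^ r := Real.rpow_pos_of_pos hn r
  have hArw : A ^ r = (A / n) ^ r * n ^ r := by
    rw [Real.div_rpow hA0 hn.le]
    field_simp
  have hBrw : n ^ (r - 1) * B = (B / n) * n ^ r := by
    rw [Real.rpow_sub hn, Real.rpow_one]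
    field_simp
  constructor
  · rw [hArw, hBrw]
    exact mul_le_mul_of_nonneg_right hJ hnr.le
  · rw [hArw, hBrw]
    constructor
    · intro h
      have h' : (A / n) ^ r = B / n := mul_right_cancel₀ hnr.ne' h
      have := hE.1 (by rw [hsum2]; exact h')
      intro i hi j hj
      rw [this i hi, this j hj]
    · intro h
      have hall : ∀ j ∈ s, a j = A / n := by
        intro j hj
        have : A = n * a j := by
          rw [hAdef, Finset.sum_congr rfl (fun i hi => h i hi j hj),
            Finset.sum_const, nsmul_eq_mul]
        rw [this]
        field_simp
      have := hE.2 hall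
      rw [hsum2] at this
      rw [this]

lemma holder_key {ι : Type*} (s : Finset ι) (hs : s.Nonempty) (f : ι → ℝ)
    (hf : ∀ i ∈ s, 0 ≤ f i) {p q : ℝ} (hq : 0 < q) (hpq : q < p) :
    (∑ i ∈ s, f i ^ q) ^ (p / q) ≤ (s.card : ℝ) ^ (p / q - 1) * ∑ i ∈ s, f i ^ p ∧
    ((∑ i ∈ s, f i ^ q) ^ (p / q) = (s.card : ℝ) ^ (p / q - 1) * ∑ i ∈ s, f i ^ p ↔
      ∀ i ∈ s, ∀ j ∈ s, f i = f j) := by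
  have hr : 1 < p / q := (one_lt_div hq).2 hpq
  have hkey := jensen_key s hs (fun i => f i ^ q)
    (fun i hi => Real.rpow_nonneg (hf i hi) q) hr
  have hrw : ∀ i ∈ s, (f i ^ q) ^ (p / q) = f i ^ p := by
    intro i hi
    rw [← Real.rpow_mul (hf i hi)]
    congr 1
    field_simp
  rw [Finset.sum_congr rfl hrw] at hkey
  refine ⟨hkey.1, hkey.2.trans ?_⟩
  constructor
  · intro h i hi j hj
    exact (rpow_left_inj' (hf i hi) (hf j hj) hq).1 (h i hi j hj)
  · intro h i hi j hj
    show f i ^ q = f j ^ q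
    rw [h i hi j hj]


lemma alg_key (m : ℕ) (hm : 0 < m) (p q Tq Tp : ℝ) (hq : 0 < q) (hpq : q < p)
    (hTq0 : 0 ≤ Tq) (hTp0 : 0 ≤ Tp) :
    (Tq ^ (p / q) ≤ ((2 * m : ℕ) : ℝ) ^ (p / q - 1) * Tp →
      (m : ℝ) ^ (1 / p - 1 / q) * (Tq / 2) ^ (1 / q) ≤ (Tp / 2) ^ (1 / p)) ∧
    ((Tp / 2) ^ (1 / p) = (m : ℝ) ^ (1 / p - 1 / q) * (Tq / 2) ^ (1 / q) ↔
      Tq ^ (p / q) = ((2 * m : ℕ) : ℝ) ^ (p / q - 1) * Tp) := by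
  have hp : 0 < p := hq.trans hpq
  have hmR : (0:ℝ) < (m : ℝ) := by exact_mod_cast hm
  set r : ℝ := p / q with hrdef
  set X : ℝ := (m : ℝ) ^ (1 / p - 1 / q) * (Tq / 2) ^ (1 / q) with hXdef
  set Y : ℝ := (Tp / 2) ^ (1 / p) with hYdef
  have hX0 : 0 ≤ X := by positivity
  have hY0 : 0 ≤ Y := by positivity
  set C : ℝ := 2 ^ r * (m : ℝ) ^ (r - 1) with hCdef
  have hC0 : 0 < C := by positivity
  have hXp : X ^ p = Tq ^ r / C := by
    rw [hXdef, Real.mul_rpow (by positivity) (by positivity),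
      ← Real.rpow_mul (by positivity), ← Real.rpow_mul (by positivity),
      show (1 / p - 1 / q) * p = 1 - r by rw [hrdef]; field_simp,
      show (1 / q) * p = r by rw [hrdef]; field_simp,
      Real.div_rpow hTq0 (by norm_num : (0:ℝ) ≤ 2),
      show (1:ℝ) - r = -(r - 1) by ring, Real.rpow_neg hmR.le, hCdef]
    rw [inv_mul_eq_div, div_div]
  have hYp : Y ^ p = Tp / 2 := by
    rw [hYdef, ← Real.rpow_mul (by positivity), one_div_mul_cancel hp.ne',
      Real.rpow_one]
  have hNrw : ((2 * m : ℕ) : ℝ) ^ (r - 1) * Tp = Tp / 2 * C := by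
    have h2m : ((2 * m : ℕ) : ℝ) = 2 * (m : ℝ) := by push_cast; ring
    rw [h2m, Real.mul_rpow (by norm_num) hmR.le, hCdef,
      Real.rpow_sub (by norm_num : (0:ℝ) < 2), Real.rpow_one]
    ring
  constructor
  · intro hineq
    rw [← Real.rpow_le_rpow_iff hX0 hY0 hp, hXp, hYp, div_le_iff₀ hC0, ← hNrw]
    exact hineq
  · rw [← rpow_left_inj' hY0 hX0 hp, hXp, hYp, eq_div_iff hC0.ne', hNrw]
    exact eq_comm

/-- The general Albertson irregularity index
`A_p(G) = (∑_{uv ∈ E(G)} |d(u) - d(v)|^p)^(1/p)`,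
computed as half the sum over ordered adjacent pairs. -/
noncomputable def Ap {V : Type*} [Fintype V] (G : SimpleGraph V) [DecidableRel G.Adj]
    (p : ℝ) : ℝ :=
  ((∑ u : V, ∑ v ∈ G.neighborFinset u,
      |(G.degree u : ℝ) - (G.degree v : ℝ)| ^ p) / 2) ^ (1 / p)

theorem stmt0 {V : Type*} [Fintype V] [DecidableEq V]
    (G : SimpleGraph V) [DecidableRel G.Adj] (hG : G.Connected)
    (p q : ℝ) (hq : 0 < q) (hpq : q < p) :
    (G.edgeFinset.card : ℝ) ^ (1 / p - 1 / q) * Ap G q ≤ Ap G p ∧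
    (Ap G p = (G.edgeFinset.card : ℝ) ^ (1 / p - 1 / q) * Ap G q ↔
      ∃ c : ℝ, ∀ u v : V, G.Adj u v → |(G.degree u : ℝ) - (G.degree v : ℝ)| = c) := by
  classical
  have hp : 0 < p := hq.trans hpq
  set D : Finset (Σ _ : V, V) := (univ : Finset V).sigma (fun u => G.neighborFinset u)
    with hD
  set f : (Σ _ : V, V) → ℝ := fun x => |(G.degree x.1 : ℝ) - (G.degree x.2 : ℝ)|
    with hfdef
  have hf0 : ∀ x ∈ D, 0 ≤ f x := fun x _ => abs_nonneg _
  have hsum : ∀ r : ℝ, (∑ u : V, ∑ v ∈ G.neighborFinset u,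
      |(G.degree u : ℝ) - (G.degree v : ℝ)| ^ r) = ∑ x ∈ D, f x ^ r := by
    intro r
    exact Finset.sum_sigma' univ (fun u => G.neighborFinset u)
      (fun u v => |(G.degree u : ℝ) - (G.degree v : ℝ)| ^ r)
  have hcard : D.card = 2 * G.edgeFinset.card := by
    rw [hD, Finset.card_sigma]
    simp only [SimpleGraph.card_neighborFinset_eq_degree]
    exact G.sum_degrees_eq_twice_card_edges
  set m : ℕ := G.edgeFinset.card with hmdef
  by_cases hm : m = 0
  · -- no edges
    have hE : G.edgeFinset = ∅ := Finset.card_eq_zero.mp hm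
    have hnoadj : ∀ u v : V, ¬ G.Adj u v := by
      intro u v h
      have : s(u, v) ∈ G.edgeFinset := SimpleGraph.mem_edgeFinset.2 h
      rw [hE] at this
      exact absurd this (Finset.notMem_empty _)
    have hN : ∀ u, G.neighborFinset u = ∅ := by
      intro u
      ext v
      simp [SimpleGraph.mem_neighborFinset, hnoadj]
    have hAp : ∀ r : ℝ, r ≠ 0 → Ap G r = 0 := by
      intro r hr
      unfold Ap
      have hz : (∑ u : V, ∑ v ∈ G.neighborFinset u,
          |(G.degree u : ℝ) - (G.degree v : ℝ)| ^ r) = 0 := by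
        simp [hN]
      rw [hz, zero_div]
      exact Real.zero_rpow (one_div_ne_zero hr)
    have hepq : (1:ℝ) / p - 1 / q ≠ 0 := by
      have : (1:ℝ) / p < 1 / q := one_div_lt_one_div_of_lt hq hpq
      linarith
    rw [hAp p hp.ne', hAp q hq.ne', hm]
    push_cast
    rw [Real.zero_rpow hepq]
    norm_num
    exact ⟨0, fun u v h => absurd h (hnoadj u v)⟩
  · have hmpos : 0 < m := Nat.pos_of_ne_zero hm
    have hDne : D.Nonempty := by
      rw [← Finset.card_pos, hcard]
      omega
    obtain ⟨hineq, hiff⟩ := holder_key D hDne f hf0 hq hpq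
    rw [hcard] at hineq hiff
    have hTq0 : 0 ≤ ∑ x ∈ D, f x ^ q :=
      Finset.sum_nonneg fun i hi => Real.rpow_nonneg (hf0 i hi) q
    have hTp0 : 0 ≤ ∑ x ∈ D, f x ^ p :=
      Finset.sum_nonneg fun i hi => Real.rpow_nonneg (hf0 i hi) p
    have hApp : Ap G p = ((∑ x ∈ D, f x ^ p) / 2) ^ (1 / p) := by
      unfold Ap
      rw [hsum p]
    have hApq : Ap G q = ((∑ x ∈ D, f x ^ q) / 2) ^ (1 / q) := by
      unfold Ap
      rw [hsum q]
    obtain ⟨halg1, halg2⟩ := alg_key m hmpos p q (∑ x ∈ D, f x ^ q) (∑ x ∈ D, f x ^ p)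
      hq hpq hTq0 hTp0
    constructor
    · rw [hApp, hApq]
      exact halg1 hineq
    · rw [hApp, hApq, halg2, hiff]
      constructor
      · intro hall
        obtain ⟨x0, hx0⟩ := hDne
        refine ⟨f x0, fun u v huv => ?_⟩
        have hx : (⟨u, v⟩ : Σ _ : V, V) ∈ D := by
          rw [hD]
          exact Finset.mem_sigma.2 ⟨Finset.mem_univ _,
            (SimpleGraph.mem_neighborFinset G u v).2 huv⟩
        exact hall _ hx _ hx0
      · rintro ⟨c, hc⟩ i hi j hj
        have hi' : G.Adj i.1 i.2 :=
          (SimpleGraph.mem_neighborFinset G i.1 i.2).1 (Finset.mem_sigma.1 hi).2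
        have hj' : G.Adj j.1 j.2 :=
          (SimpleGraph.mem_neighborFinset G j.1 j.2).1 (Finset.mem_sigma.1 hj).2
        show f i = f j
        rw [hfdef]
        simp only
        rw [hc _ _ hi', hc _ _ hj']
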